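/- Let K be a differential field of characteristic zero and t a primitive generator over K. For each f ∈ K(t), there exists a unique t-simple element h ∈ K(t) such that f − h ∈ K(t)′ + K[t]. -/

import Mathlib

open Polynomial

namespace HermiteAux

variable {F : Type*} [Field F] [CharZero F] {δ : F → F} {K : Subfield F} {t : F}

section Delta

theorem δ_zero (hδadd : ∀ a b : F, δ (a + b) = δ a + δ b) : δ 0 = 0 := by
  have h := hδadd 0 0
  simp only [add_zero] at h
  linear_combination -h

theorem δ_one (hδmul : ∀ a b : F, δ (a * b) = δ a * b + a * δ b) : δ 1 = 0 := by
  have h := hδmul 1 1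
  simp only [mul_one, one_mul] at h
  linear_combination -h

theorem δ_neg (hδadd : ∀ a b : F, δ (a + b) = δ a + δ b) (x : F) : δ (-x) = -δ x := by
  have h := hδadd x (-x)
  rw [add_neg_cancel, δ_zero hδadd] at h
  linear_combination -h

theorem δ_sub (hδadd : ∀ a b : F, δ (a + b) = δ a + δ b) (x y : F) :
    δ (x - y) = δ x - δ y := by
  rw [sub_eq_add_neg, hδadd, δ_neg hδadd, sub_eq_add_neg]

theorem δ_natCast (hδadd : ∀ a b : F, δ (a + b) = δ a + δ b)
    (hδmul : ∀ a b : F, δ (a * b) = δ a * b + a * δ b) (n : ℕ) : δ (n : F) = 0 := by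
  induction n with
  | zero => simpa using δ_zero hδadd
  | succ k ih => push_cast; rw [hδadd, ih, δ_one hδmul]; ring

theorem δ_pow (hδmul : ∀ a b : F, δ (a * b) = δ a * b + a * δ b) (x : F) (n : ℕ) :
    δ (x ^ (n + 1)) = (n + 1 : F) * x ^ n * δ x := by
  induction n with
  | zero => simp
  | succ k ih =>
    rw [pow_succ, hδmul, ih]
    push_cast
    ring

theorem δ_inv (hδadd : ∀ a b : F, δ (a + b) = δ a + δ b)
    (hδmul : ∀ a b : F, δ (a * b) = δ a * b + a * δ b) (x : F) (hx : x ≠ 0) :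
    δ x⁻¹ = -δ x / x ^ 2 := by
  have h : δ (x * x⁻¹) = 0 := by rw [mul_inv_cancel₀ hx, δ_one hδmul]
  rw [hδmul] at h
  have hinv : x * x⁻¹ = 1 := mul_inv_cancel₀ hx
  rw [eq_div_iff (pow_ne_zero 2 hx)]
  linear_combination x * h - δ x * hinv

theorem δ_div (hδadd : ∀ a b : F, δ (a + b) = δ a + δ b)
    (hδmul : ∀ a b : F, δ (a * b) = δ a * b + a * δ b) (x y : F) (hy : y ≠ 0) :
    δ (x / y) = (δ x * y - x * δ y) / y ^ 2 := by
  rw [div_eq_mul_inv, hδmul, δ_inv hδadd hδmul y hy]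
  field_simp
  ring

end Delta

variable (δ K t) in
/-- The coefficientwise-plus-derivative derivation on `K[X]`. -/
noncomputable def DD (hK : ∀ a ∈ K, δ a ∈ K) (ht : δ t ∈ K) (p : Polynomial ↥K) :
    Polynomial ↥K :=
  p.sum (fun n a => C (⟨δ a, hK a a.2⟩ : ↥K) * X ^ n) + C (⟨δ t, ht⟩ : ↥K) * derivative p

theorem εinj (htr : Transcendental ↥K t) :
    Function.Injective (Polynomial.aeval t : Polynomial ↥K → F) :=
  transcendental_iff_injective.mp htr

theorem ε_ne_zero (htr : Transcendental ↥K t) {p : Polynomial ↥K} (hp : p ≠ 0) :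
    Polynomial.aeval t p ≠ 0 := by
  intro h
  exact hp (εinj htr (by simpa using h))

section DDfacts

variable (hδadd : ∀ a b : F, δ (a + b) = δ a + δ b)
    (hδmul : ∀ a b : F, δ (a * b) = δ a * b + a * δ b)
    (hK : ∀ a ∈ K, δ a ∈ K) (ht : δ t ∈ K)
    (htr : Transcendental ↥K t)

include hδadd in
theorem DD_coeff (p : Polynomial ↥K) (k : ℕ) :
    (DD δ K t hK ht p).coeff k
      = ⟨δ (p.coeff k), hK _ (p.coeff k).2⟩ + ⟨δ t, ht⟩ * ((k + 1 : ↥K) * p.coeff (k + 1)) := by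
  have hz : ∀ h, (⟨δ ((0 : ↥K) : F), h⟩ : ↥K) = 0 := by
    intro h; ext; simpa using δ_zero hδadd
  unfold DD
  rw [coeff_add, coeff_C_mul, coeff_derivative, Polynomial.sum_def, finset_sum_coeff]
  simp only [coeff_C_mul, coeff_X_pow, mul_ite, mul_one, mul_zero]
  rw [Finset.sum_ite_eq p.support k (fun n => (⟨δ ((p.coeff n : F)), hK _ (p.coeff n).2⟩ : ↥K))]
  by_cases hmem : k ∈ p.support
  · rw [if_pos hmem]; ring
  · rw [if_neg hmem]
    have h0 : (⟨δ ((p.coeff k : F)), hK _ (p.coeff k).2⟩ : ↥K) = 0 := by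
      have hk0 : p.coeff k = 0 := Polynomial.notMem_support_iff.mp hmem
      ext
      show δ ((p.coeff k : F)) = 0
      rw [hk0]
      simpa using δ_zero hδadd
    rw [h0]
    ring

include hδadd hδmul in
theorem ε_DD (p : Polynomial ↥K) :
    δ (Polynomial.aeval t p) = Polynomial.aeval t (DD δ K t hK ht p) := by
  have hz : ∀ h, (⟨δ ((0 : ↥K) : F), h⟩ : ↥K) = 0 := by
    intro h; ext; simpa using δ_zero hδadd
  induction p using Polynomial.induction_on' with
  | add p q hp hq =>
    have hDD : DD δ K t hK ht (p + q) = DD δ K t hK ht p + DD δ K t hK ht q := by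
      unfold DD
      rw [Polynomial.sum_add_index p q _ (fun n => by rw [hz]; simp)
        (fun n a b => by
          have : (⟨δ ((a + b : ↥K) : F), hK _ (a+b).2⟩ : ↥K)
              = ⟨δ (a : F), hK _ a.2⟩ + ⟨δ (b : F), hK _ b.2⟩ := by
            ext; simpa using hδadd a b
          rw [this, C_add]; ring), derivative_add]
      ring
    rw [map_add, hδadd, hp, hq, hDD, map_add]
  | monomial n a =>
    have hts : ∀ m : ℕ, δ (t ^ m) = (m : F) * t ^ (m - 1) * δ t := by
      intro m
      match m with
      | 0 => simp [δ_one hδmul]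
      | m + 1 => rw [δ_pow hδmul]; push_cast; simp
    have hda : δ ((a : F)) = ((⟨δ (a : F), hK _ a.2⟩ : ↥K) : F) := rfl
    have hsum : DD δ K t hK ht (monomial n a)
        = C (⟨δ (a : F), hK _ a.2⟩ : ↥K) * X ^ n
          + C (⟨δ t, ht⟩ : ↥K) * (monomial (n - 1) (a * n)) := by
      unfold DD
      rw [Polynomial.sum_monomial_index a _ (by rw [hz]; simp), derivative_monomial]
    have hcoe : ∀ x : ↥K, algebraMap ↥K F x = (x : F) := fun x => rfl
    have hdt : δ t = ((⟨δ t, ht⟩ : ↥K) : F) := rfl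
    rw [hsum, map_add, map_mul, map_mul, aeval_C, aeval_C, map_pow, aeval_X, aeval_monomial,
      aeval_monomial, hδmul, hts n]
    simp only [hcoe]
    push_cast
    ring

include hδadd hδmul htr in
theorem DD_add (p q : Polynomial ↥K) :
    DD δ K t hK ht (p + q) = DD δ K t hK ht p + DD δ K t hK ht q := by
  apply εinj htr
  rw [← ε_DD hδadd hδmul hK ht (p + q), map_add, hδadd, ε_DD hδadd hδmul hK ht,
    ε_DD hδadd hδmul hK ht, map_add]

include hδadd hδmul htr in
theorem DD_mul (p q : Polynomial ↥K) :
    DD δ K t hK ht (p * q) = DD δ K t hK ht p * q + p * DD δ K t hK ht q := by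
  apply εinj htr
  rw [← ε_DD hδadd hδmul hK ht (p * q), map_mul, hδmul, ε_DD hδadd hδmul hK ht,
    ε_DD hδadd hδmul hK ht, map_add, map_mul, map_mul]

include hδadd hδmul htr in
theorem DD_pow (v : Polynomial ↥K) (n : ℕ) :
    DD δ K t hK ht (v ^ (n + 1)) = C ((n + 1 : ℕ) : ↥K) * v ^ n * DD δ K t hK ht v := by
  apply εinj htr
  rw [← ε_DD hδadd hδmul hK ht, map_pow, δ_pow hδmul, map_mul, map_mul, aeval_C, map_pow,
    ← ε_DD hδadd hδmul hK ht, map_natCast (algebraMap ↥K F)]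
  push_cast
  ring

include hδadd hδmul in
theorem DD_degree_lt {p : Polynomial ↥K} (hp : p.Monic) :
    (DD δ K t hK ht p).degree < p.degree := by
  rw [degree_eq_natDegree hp.ne_zero]
  apply (degree_lt_iff_coeff_zero _ _).mpr
  intro m hm
  have hm' : p.natDegree ≤ m := by exact_mod_cast hm
  rw [DD_coeff hδadd hK ht]
  have h1 : p.coeff (m + 1) = 0 := coeff_eq_zero_of_natDegree_lt (by omega)
  have h2 : δ ((p.coeff m : F)) = 0 := by
    rcases eq_or_lt_of_le hm' with h | h
    · rw [← h, hp.coeff_natDegree]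
      simpa using δ_one hδmul
    · rw [coeff_eq_zero_of_natDegree_lt h]
      simpa using δ_zero hδadd
  rw [h1]
  have hz1 : (⟨δ ((p.coeff m : F)), hK _ (p.coeff m).2⟩ : ↥K) = 0 := by
    ext; exact h2
  rw [hz1, mul_zero, mul_zero, add_zero]

include hδadd hδmul htr in
theorem DD_eq_zero_natDegree (hnewconst : ∀ c : F, δ c = 0 → c ∈ K)
    {p : Polynomial ↥K} (hp : p.Monic)
    (h : DD δ K t hK ht p = 0) : p.natDegree = 0 := by
  by_contra hn
  obtain ⟨k, hk⟩ : ∃ k, p.natDegree = k + 1 := ⟨p.natDegree - 1, by omega⟩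
  have hc := DD_coeff hδadd hK ht p k
  rw [h, coeff_zero] at hc
  have hck1 : p.coeff (k + 1) = 1 := by rw [← hk]; exact hp.coeff_natDegree
  rw [hck1, mul_one] at hc
  -- push to F
  have hcF : (0 : F) = δ ((p.coeff k : F)) + δ t * ((k : F) + 1) := by
    have h2 := congrArg (fun x : ↥K => (x : F)) hc
    push_cast at h2
    exact h2
  set c : F := ((k : F) + 1) * t + (p.coeff k : F) with hcdef
  have hδc : δ c = 0 := by
    have h1 : δ ((k : F) + 1) = 0 := by
      have h3 := δ_natCast hδadd hδmul (k + 1)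
      push_cast at h3
      exact h3
    rw [hcdef, hδadd, hδmul, h1]
    linear_combination -hcF
  have hcK : c ∈ K := hnewconst c hδc
  have htK : t ∈ K := by
    have h1 : ((k : F) + 1) ≠ 0 := by
      have : ((k : F) + 1) = ((k + 1 : ℕ) : F) := by push_cast; ring
      rw [this]; exact_mod_cast Nat.succ_ne_zero k
    have : t = ((k : F) + 1)⁻¹ * (c - (p.coeff k : F)) := by
      field_simp [hcdef]
      rw [hcdef]; ring
    rw [this]
    refine K.mul_mem (K.inv_mem ?_) (K.sub_mem hcK (p.coeff k).2)
    have : ((k : F) + 1) = ((k + 1 : ℕ) : F) := by push_cast; ring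
    rw [this]
    exact_mod_cast natCast_mem K (k+1)
  refine htr ⟨X - C (⟨t, htK⟩ : ↥K), X_sub_C_ne_zero _, ?_⟩
  rw [map_sub, aeval_X, aeval_C]
  exact sub_eq_zero_of_eq rfl

include hδadd hδmul htr in
theorem coprime_DD (hnewconst : ∀ c : F, δ c = 0 → c ∈ K)
    {p : Polynomial ↥K} (hp : p.Monic) (hsf : Squarefree p) :
    IsCoprime p (DD δ K t hK ht p) := by
  classical
  by_contra hnc
  have hg0 : ¬ IsUnit (gcd p (DD δ K t hK ht p)) := fun hu => hnc ((gcd_isUnit_iff _ _).mp hu)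
  set g0 := gcd p (DD δ K t hK ht p) with hg0def
  have hg0ne : g0 ≠ 0 := gcd_ne_zero_of_left hp.ne_zero
  set g := normalize g0 with hgdef
  have hgmonic : g.Monic := monic_normalize hg0ne
  have hgp : g ∣ p := (normalize_dvd_iff).mpr (gcd_dvd_left _ _)
  have hgD : g ∣ DD δ K t hK ht p := (normalize_dvd_iff).mpr (gcd_dvd_right _ _)
  obtain ⟨w, hw⟩ := hgp
  have hcop : IsCoprime g w := by
    apply EuclideanDomain.isCoprime_of_dvd
    · intro hgw; exact hgmonic.ne_zero hgw.1
    · intro z hz hz0 hzg hzw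
      exact hz (hsf z (by rw [hw]; exact mul_dvd_mul hzg hzw))
  have hDp : DD δ K t hK ht p = DD δ K t hK ht g * w + g * DD δ K t hK ht w := by
    rw [hw]; exact DD_mul hδadd hδmul hK ht htr g w
  have hdvd : g ∣ DD δ K t hK ht g * w := by
    have : DD δ K t hK ht g * w = DD δ K t hK ht p - g * DD δ K t hK ht w := by
      rw [hDp]; ring
    rw [this]
    exact dvd_sub hgD (Dvd.intro _ rfl)
  have hgDg : g ∣ DD δ K t hK ht g := hcop.dvd_of_dvd_mul_right hdvd
  have hDg0 : DD δ K t hK ht g = 0 :=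
    eq_zero_of_dvd_of_degree_lt hgDg (DD_degree_lt hδadd hδmul hK ht hgmonic)
  have : g = 1 := hgmonic.natDegree_eq_zero.mp
    (DD_eq_zero_natDegree hδadd hδmul hK ht htr hnewconst hgmonic hDg0)
  exact hg0 (normalize_eq_one.mp this)

end DDfacts

section MainLemmas

variable (hδadd : ∀ a b : F, δ (a + b) = δ a + δ b)
    (hδmul : ∀ a b : F, δ (a * b) = δ a * b + a * δ b)
    (hK : ∀ a ∈ K, δ a ∈ K) (ht : δ t ∈ K)
    (htr : Transcendental ↥K t)
    (hgen : Subfield.closure ((K : Set F) ∪ {t}) = ⊤)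
    (hnewconst : ∀ c : F, δ c = 0 → c ∈ K)

include htr hgen in
/-- every element of `F` is a quotient of polynomial values in `t`. -/
theorem rep (x : F) : ∃ p q : Polynomial ↥K, q ≠ 0 ∧
    x = Polynomial.aeval t p / Polynomial.aeval t q := by
  let S : Subfield F :=
    { carrier := {x | ∃ p q : Polynomial ↥K, q ≠ 0 ∧
        x = Polynomial.aeval t p / Polynomial.aeval t q}
      mul_mem' := by
        rintro x y ⟨p1, q1, hq1, rfl⟩ ⟨p2, q2, hq2, rfl⟩
        exact ⟨p1 * p2, q1 * q2, mul_ne_zero hq1 hq2, by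
          rw [map_mul, map_mul, div_mul_div_comm]⟩
      one_mem' := ⟨1, 1, one_ne_zero, by simp⟩
      add_mem' := by
        rintro x y ⟨p1, q1, hq1, rfl⟩ ⟨p2, q2, hq2, rfl⟩
        exact ⟨p1 * q2 + q1 * p2, q1 * q2, mul_ne_zero hq1 hq2, by
          rw [div_add_div _ _ (ε_ne_zero htr hq1) (ε_ne_zero htr hq2), map_add,
            map_mul, map_mul, map_mul]⟩
      zero_mem' := ⟨0, 1, one_ne_zero, by simp⟩
      neg_mem' := by
        rintro x ⟨p, q, hq, rfl⟩
        exact ⟨-p, q, hq, by rw [map_neg, neg_div]⟩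
      inv_mem' := by
        rintro x ⟨p, q, hq, rfl⟩
        by_cases hp : p = 0
        · exact ⟨0, 1, one_ne_zero, by simp [hp]⟩
        · exact ⟨q, p, hp, by rw [← one_div, one_div_div]⟩ }
  have hx : x ∈ S := by
    have h1 : x ∈ Subfield.closure ((K : Set F) ∪ {t}) := by rw [hgen]; trivial
    refine Subfield.closure_le.mpr ?_ h1
    rintro y (hy | hy)
    · exact ⟨C (⟨y, hy⟩ : ↥K), 1, one_ne_zero, by simp [aeval_C]; rfl⟩
    · rcases hy with rfl
      exact ⟨X, 1, one_ne_zero, by simp⟩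
  exact hx

theorem isCoprime_of_isUnit_right' {R : Type*} [CommSemiring R] (x y : R) (h : IsUnit y) :
    IsCoprime x y := by
  obtain ⟨u, rfl⟩ := h
  exact ⟨0, ↑u⁻¹, by simp⟩

theorem squarefree_mul_of_coprime {R : Type*} [CommRing R] [IsDomain R]
    [UniqueFactorizationMonoid R] {x y : R}
    (hx : Squarefree x) (hy : Squarefree y) (hco : IsCoprime x y) : Squarefree (x * y) := by
  intro z hz
  by_contra hzu
  have hz0 : z ≠ 0 := by
    rintro rfl
    rw [mul_zero, zero_dvd_iff, mul_eq_zero] at hz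
    rcases hz with rfl | rfl
    · exact hx.ne_zero rfl
    · exact hy.ne_zero rfl
  obtain ⟨v, hvirr, hvz⟩ := WfDvdMonoid.exists_irreducible_factor hzu hz0
  have hvp : Prime v := hvirr.prime
  have hv2 : v ^ 2 ∣ x * y := by
    calc v ^ 2 = v * v := sq v
    _ ∣ z * z := mul_dvd_mul hvz hvz
    _ ∣ x * y := hz
  have hvxy : v ∣ x * y := (dvd_pow_self v two_ne_zero).trans hv2
  rcases hvp.dvd_mul.mp hvxy with hvx | hvy
  · have hvny : ¬ v ∣ y := fun hd => hvirr.not_isUnit (hco.isUnit_of_dvd' hvx hd)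
    have : v ^ 2 ∣ x := hvp.pow_dvd_of_dvd_mul_right 2 hvny hv2
    exact hvirr.not_isUnit (hx v (by rwa [← sq]))
  · have hvnx : ¬ v ∣ x := fun hd => hvirr.not_isUnit (hco.isUnit_of_dvd' hd hvy)
    have : v ^ 2 ∣ y := hvp.pow_dvd_of_dvd_mul_left 2 hvnx hv2
    exact hvirr.not_isUnit (hy v (by rwa [← sq]))

theorem extract_pow {R : Type*} [Field R] {v : R[X]} (hv : 0 < v.natDegree) :
    ∀ N (y : R[X]), y.natDegree ≤ N → y ≠ 0 → ∃ (m : ℕ) (z : R[X]), y = v ^ m * z ∧ ¬ v ∣ z := by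
  have hv0 : v ≠ 0 := fun h => by simp [h] at hv
  intro N
  induction N with
  | zero =>
    intro y hy hy0
    refine ⟨0, y, by simp, fun hd => ?_⟩
    obtain ⟨z, rfl⟩ := hd
    have hz0 : z ≠ 0 := by rintro rfl; simp at hy0
    rw [natDegree_mul hv0 hz0] at hy
    omega
  | succ N ih =>
    intro y hy hy0
    by_cases hvy : v ∣ y
    · obtain ⟨z, rfl⟩ := hvy
      have hz0 : z ≠ 0 := by rintro rfl; simp at hy0
      have hzdeg : z.natDegree ≤ N := by
        rw [natDegree_mul hv0 hz0] at hy
        omega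
      obtain ⟨m, z', hz', hvz'⟩ := ih z hzdeg hz0
      exact ⟨m + 1, z', by rw [hz']; ring, hvz'⟩
    · exact ⟨0, y, by simp, hvy⟩

theorem reduce_frac {R : Type*} [Field R] (a b : R[X]) (hb : b ≠ 0) :
    ∃ g a1 b1 : R[X], g ≠ 0 ∧ a = g * a1 ∧ b = g * b1 ∧ b1 ≠ 0 ∧ IsCoprime a1 b1 := by
  classical
  set g := EuclideanDomain.gcd a b with hg
  obtain ⟨a1, ha1⟩ : g ∣ a := EuclideanDomain.gcd_dvd_left a b
  obtain ⟨b1, hb1⟩ : g ∣ b := EuclideanDomain.gcd_dvd_right a b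
  have hg0 : g ≠ 0 := by
    intro h
    rw [h, zero_mul] at hb1
    exact hb hb1
  have hb10 : b1 ≠ 0 := by
    rintro rfl
    rw [mul_zero] at hb1
    exact hb hb1
  refine ⟨g, a1, b1, hg0, ha1, hb1, hb10, ?_⟩
  apply EuclideanDomain.isCoprime_of_dvd
  · rintro ⟨-, rfl⟩; exact hb10 rfl
  · intro z hz hz0 hza hzb
    apply hz
    have h1 : g * z ∣ a := by rw [ha1]; exact mul_dvd_mul_left g hza
    have h2 : g * z ∣ b := by rw [hb1]; exact mul_dvd_mul_left g hzb
    have h3 : g * z ∣ g * 1 := by rw [mul_one]; exact EuclideanDomain.dvd_gcd h1 h2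
    exact isUnit_of_dvd_one ((mul_dvd_mul_iff_left hg0).mp h3)

include hδadd hδmul hK ht htr hgen hnewconst in
/-- Core uniqueness lemma: a nonzero reduced `t`-simple element is not of the
form `δ w + polynomial`. -/
theorem simple_not_deriv {a b : Polynomial ↥K} (hb : b.Monic) (hsf : Squarefree b)
    (hco : IsCoprime a b) (hdeg : a.degree < b.degree)
    {w : F} {r : Polynomial ↥K}
    (heq : Polynomial.aeval t a / Polynomial.aeval t b = δ w + Polynomial.aeval t r) :
    a = 0 := by
  classical
  by_contra ha0
  have hbne : b ≠ 0 := hb.ne_zero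
  have hbdeg : 0 < b.natDegree := by
    by_contra hbd
    push_neg at hbd
    have : b = 1 := hb.natDegree_eq_zero.mp (by omega)
    rw [this, degree_one] at hdeg
    exact ha0 (degree_eq_bot.mp (Nat.WithBot.lt_zero_iff.mp hdeg))
  have hbnu : ¬ IsUnit b := not_isUnit_of_natDegree_pos b hbdeg
  obtain ⟨v0, hv0irr, hv0b⟩ := WfDvdMonoid.exists_irreducible_factor hbnu hbne
  set v := normalize v0 with hvdef
  have hvirr : Irreducible v := (associated_normalize v0).irreducible hv0irr
  have hvmonic : v.Monic := monic_normalize hv0irr.ne_zero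
  have hvb : v ∣ b := (normalize_dvd_iff).mpr hv0b
  have hvprime : Prime v := hvirr.prime
  obtain ⟨b', hb'⟩ := id hvb
  have hvb' : ¬ v ∣ b' := by
    intro hd
    exact hvirr.not_isUnit (hsf v (by rw [hb']; exact mul_dvd_mul_left v hd))
  have hva : ¬ v ∣ a := fun hd => hvirr.not_isUnit (hco.isUnit_of_dvd' hd hvb)
  -- obtain a reduced representation of w
  obtain ⟨x, y, hy, hcoxy, hwxy⟩ :
      ∃ x y : Polynomial ↥K, y ≠ 0 ∧ IsCoprime x y ∧
        w = Polynomial.aeval t x / Polynomial.aeval t y := by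
    obtain ⟨x0, y0, hy0, hw0⟩ := rep htr hgen w
    obtain ⟨g, x1, y1, hg0, hx1, hy1, hy10, hco1⟩ := reduce_frac x0 y0 hy0
    refine ⟨x1, y1, hy10, hco1, ?_⟩
    rw [hw0, hx1, hy1, map_mul, map_mul,
      mul_div_mul_left _ _ (ε_ne_zero htr hg0)]
  have hεy := ε_ne_zero htr hy
  have hεb := ε_ne_zero htr hbne
  -- master polynomial identity
  have key : (a - r * b) * y ^ 2 = (DD δ K t hK ht x * y - x * DD δ K t hK ht y) * b := by
    apply εinj htr
    have hδw : δ w = (Polynomial.aeval t (DD δ K t hK ht x) * Polynomial.aeval t y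
        - Polynomial.aeval t x * Polynomial.aeval t (DD δ K t hK ht y))
          / (Polynomial.aeval t y) ^ 2 := by
      rw [hwxy, δ_div hδadd hδmul _ _ hεy, ε_DD hδadd hδmul hK ht, ε_DD hδadd hδmul hK ht]
    rw [hδw] at heq
    rw [div_eq_iff hεb] at heq
    push_cast [map_mul, map_sub, map_pow, map_add]
    field_simp at heq
    linear_combination heq
  -- extract the power of v from y
  obtain ⟨m, z, hyz, hvz⟩ := extract_pow hvirr.natDegree_pos y.natDegree y le_rfl hy
  have hv0 : v ≠ 0 := hvmonic.ne_zero
  cases m with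
  | zero =>
    rw [pow_zero, one_mul] at hyz
    subst hyz
    have h1 : v ∣ (a - r * b) * y ^ 2 := by
      rw [key, hb']
      exact ⟨b' * (DD δ K t hK ht x * y - x * DD δ K t hK ht y), by ring⟩
    have h2 : v ∣ a - r * b := by
      rcases hvprime.dvd_mul.mp h1 with h | h
      · exact h
      · exact absurd (hvprime.dvd_of_dvd_pow h) hvz
    have h3 : v ∣ a := by
      have : a = (a - r * b) + r * b := by ring
      rw [this]
      exact dvd_add h2 ⟨r * b', by rw [hb']; ring⟩
    exact hva h3
  | succ n =>
    have hvx : ¬ v ∣ x := by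
      intro hd
      refine hvirr.not_isUnit (hcoxy.isUnit_of_dvd' hd ?_)
      exact ⟨v ^ n * z, by rw [hyz]; ring⟩
    have hDy : DD δ K t hK ht y
        = C ((n + 1 : ℕ) : ↥K) * v ^ n * DD δ K t hK ht v * z
          + v ^ (n + 1) * DD δ K t hK ht z := by
      rw [hyz, DD_mul hδadd hδmul hK ht htr, DD_pow hδadd hδmul hK ht htr]
    set M := v * (DD δ K t hK ht x * z - x * DD δ K t hK ht z)
      - C ((n + 1 : ℕ) : ↥K) * x * DD δ K t hK ht v * z with hMdef
    have key2 : (a - r * b) * v ^ (n + 1) * z ^ 2 = M * b' := by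
      apply mul_left_cancel₀ (pow_ne_zero (n + 1) hv0)
      have : (a - r * b) * y ^ 2 = (DD δ K t hK ht x * y - x * DD δ K t hK ht y) * b := key
      rw [hDy, hyz, hb'] at this
      linear_combination this - r * v ^ (2 * n + 2) * z ^ 2 * hb' - v ^ (n + 1) * b' * hMdef
    have h1 : v ∣ M * b' := by
      rw [← key2]
      exact ⟨(a - r * b) * v ^ n * z ^ 2, by ring⟩
    have h2 : v ∣ M := (hvprime.dvd_mul.mp h1).resolve_right hvb'
    have h3 : v ∣ C ((n + 1 : ℕ) : ↥K) * x * DD δ K t hK ht v * z := by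
      have : C ((n + 1 : ℕ) : ↥K) * x * DD δ K t hK ht v * z
          = v * (DD δ K t hK ht x * z - x * DD δ K t hK ht z) - M := by
        rw [hMdef]; ring
      rw [this]
      exact dvd_sub (Dvd.intro _ rfl) h2
    have hCunit : IsUnit (C ((n + 1 : ℕ) : ↥K)) :=
      isUnit_C.mpr (isUnit_iff_ne_zero.mpr (by exact_mod_cast Nat.succ_ne_zero n))
    have hvC : ¬ v ∣ C ((n + 1 : ℕ) : ↥K) :=
      fun hd => hvprime.not_unit (isUnit_of_dvd_unit hd hCunit)
    have hvDv : ¬ v ∣ DD δ K t hK ht v := by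
      intro hd
      exact hvprime.not_unit
        ((coprime_DD hδadd hδmul hK ht htr hnewconst hvmonic hvirr.squarefree).isUnit_of_dvd'
          dvd_rfl hd)
    rcases hvprime.dvd_mul.mp h3 with h4 | h4
    · rcases hvprime.dvd_mul.mp h4 with h5 | h5
      · rcases hvprime.dvd_mul.mp h5 with h6 | h6
        · exact hvC h6
        · exact hvx h6
      · exact hvDv h5
    · exact hvz h4

include hδadd hδmul hK ht htr hgen hnewconst in
/-- general uniqueness lemma with non-reduced numerator. -/
theorem simple_zero {a b : Polynomial ↥K} (hb0 : b ≠ 0) (hsf : Squarefree b)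
    (hdeg : a.degree < b.degree) {w : F} {r : Polynomial ↥K}
    (heq : Polynomial.aeval t a / Polynomial.aeval t b = δ w + Polynomial.aeval t r) :
    a = 0 := by
  classical
  by_cases ha : a = 0
  · exact ha
  exfalso
  obtain ⟨g, a1, b1, hg0, ha1, hb1, hb10, hco⟩ := reduce_frac a b hb0
  have ha10 : a1 ≠ 0 := by rintro rfl; rw [mul_zero] at ha1; exact ha ha1
  set ℓ := b1.leadingCoeff with hl
  have hl0 : ℓ ≠ 0 := leadingCoeff_ne_zero.mpr hb10
  have hCinv0 : (C ℓ⁻¹ : Polynomial ↥K) ≠ 0 := by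
    simpa using inv_ne_zero hl0
  have hCC : (C ℓ : Polynomial ↥K) * C ℓ⁻¹ = 1 := by
    rw [← C_mul, mul_inv_cancel₀ hl0, C_1]
  set a2 := a1 * C ℓ⁻¹ with ha2
  set b2 := b1 * C ℓ⁻¹ with hb2
  have hb2monic : b2.Monic := monic_mul_leadingCoeff_inv hb10
  have hb2dvd : b2 ∣ b := by
    have h1 : b2 ∣ b1 := ⟨C ℓ, by rw [hb2, mul_assoc, ← C_mul, inv_mul_cancel₀ hl0, C_1, mul_one]⟩
    have h2 : b1 ∣ b := ⟨g, by rw [hb1]; ring⟩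
    exact h1.trans h2
  have hsf2 : Squarefree b2 := hsf.squarefree_of_dvd hb2dvd
  have hco2 : IsCoprime a2 b2 := by
    obtain ⟨u, vv, huv⟩ := hco
    exact ⟨C ℓ * u, C ℓ * vv, by
      rw [ha2, hb2]
      linear_combination (u * a1 + vv * b1) * hCC + huv⟩
  have hdeg12 : a1.degree < b1.degree := by
    rw [ha1, hb1, degree_mul, degree_mul] at hdeg
    exact lt_of_add_lt_add_left hdeg
  have hdeg2 : a2.degree < b2.degree := by
    rw [ha2, hb2, degree_mul, degree_mul, degree_C (inv_ne_zero hl0), add_zero, add_zero]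
    exact hdeg12
  have hfrac : Polynomial.aeval t a2 / Polynomial.aeval t b2
      = Polynomial.aeval t a / Polynomial.aeval t b := by
    rw [ha2, hb2, map_mul, map_mul,
      mul_div_mul_right _ _ (ε_ne_zero htr hCinv0), ha1, hb1, map_mul, map_mul,
      mul_div_mul_left _ _ (ε_ne_zero htr hg0)]
  have : a2 = 0 := by
    refine simple_not_deriv hδadd hδmul hK ht htr hgen hnewconst
      hb2monic hsf2 hco2 hdeg2 (w := w) (r := r) ?_
    rw [hfrac]
    exact heq
  rcases mul_eq_zero.mp this with h | h
  · exact ha10 h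
  · exact hCinv0 h

include hδadd hδmul hK ht htr hgen hnewconst in
/-- two t-simple elements differing by a derivative plus a polynomial are equal. -/
theorem diff_simple {p1 q1 p2 q2 : Polynomial ↥K} (hq1 : q1 ≠ 0) (hq2 : q2 ≠ 0)
    (hsf1 : Squarefree q1) (hsf2 : Squarefree q2)
    (hd1 : p1.degree < q1.degree) (hd2 : p2.degree < q2.degree)
    {w : F} {r : Polynomial ↥K}
    (heq : Polynomial.aeval t p1 / Polynomial.aeval t q1
        - Polynomial.aeval t p2 / Polynomial.aeval t q2 = δ w + Polynomial.aeval t r) :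
    Polynomial.aeval t p1 / Polynomial.aeval t q1
      = Polynomial.aeval t p2 / Polynomial.aeval t q2 := by
  classical
  set g := EuclideanDomain.gcd q1 q2 with hgdef
  obtain ⟨j, hj⟩ : g ∣ q1 := EuclideanDomain.gcd_dvd_left _ _
  obtain ⟨k, hk⟩ : g ∣ q2 := EuclideanDomain.gcd_dvd_right _ _
  have hg0 : g ≠ 0 := by rintro h; rw [h, zero_mul] at hj; exact hq1 hj
  have hj0 : j ≠ 0 := by rintro rfl; rw [mul_zero] at hj; exact hq1 hj
  have hk0 : k ≠ 0 := by rintro rfl; rw [mul_zero] at hk; exact hq2 hk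
  have hkq2 : k ∣ q2 := ⟨g, by rw [hk]; ring⟩
  have hcop : IsCoprime q1 k := by
    apply EuclideanDomain.isCoprime_of_dvd
    · rintro ⟨rfl, -⟩; exact hq1 rfl
    · intro z hz hz0 hzq1 hzk
      apply hz
      have hzq2 : z ∣ q2 := hzk.trans hkq2
      have hzg : z ∣ g := EuclideanDomain.dvd_gcd hzq1 hzq2
      exact hsf2 z (by rw [hk]; exact mul_dvd_mul hzg hzk)
  have hsfb : Squarefree (q1 * k) :=
    squarefree_mul_of_coprime hsf1 (hsf2.squarefree_of_dvd hkq2) hcop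
  have hb0 : q1 * k ≠ 0 := mul_ne_zero hq1 hk0
  have hbb : q1 * k = q2 * j := by rw [hj, hk]; ring
  have hdeg : (p1 * k - p2 * j).degree < (q1 * k).degree := by
    refine lt_of_le_of_lt (degree_sub_le _ _) (max_lt ?_ ?_)
    · rw [degree_mul, degree_mul]
      exact WithBot.add_lt_add_right (degree_eq_bot.not.mpr hk0) hd1
    · rw [hbb, degree_mul, degree_mul]
      exact WithBot.add_lt_add_right (degree_eq_bot.not.mpr hj0) hd2
  have hεq1 := ε_ne_zero htr hq1
  have hεq2 := ε_ne_zero htr hq2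
  have hεg := ε_ne_zero htr hg0
  have hεj := ε_ne_zero htr hj0
  have hεk := ε_ne_zero htr hk0
  have hjF : Polynomial.aeval t q1 = Polynomial.aeval t g * Polynomial.aeval t j := by
    rw [hj, map_mul]
  have hkF : Polynomial.aeval t q2 = Polynomial.aeval t g * Polynomial.aeval t k := by
    rw [hk, map_mul]
  have key : Polynomial.aeval t (p1 * k - p2 * j) / Polynomial.aeval t (q1 * k)
      = Polynomial.aeval t p1 / Polynomial.aeval t q1
        - Polynomial.aeval t p2 / Polynomial.aeval t q2 := by
    rw [map_sub, map_mul, map_mul, map_mul,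
      div_sub_div _ _ hεq1 hεq2, div_eq_div_iff (mul_ne_zero hεq1 hεk) (mul_ne_zero hεq1 hεq2)]
    linear_combination (Polynomial.aeval t q1 * Polynomial.aeval t p2 * Polynomial.aeval t k) * hjF
      - (Polynomial.aeval t q1 * Polynomial.aeval t p2 * Polynomial.aeval t j) * hkF
  have hzero : p1 * k - p2 * j = 0 := by
    refine simple_zero hδadd hδmul hK ht htr hgen hnewconst hb0 hsfb hdeg
      (w := w) (r := r) ?_
    rw [key]
    exact heq
  have : Polynomial.aeval t p1 / Polynomial.aeval t q1
      - Polynomial.aeval t p2 / Polynomial.aeval t q2 = 0 := by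
    rw [← key, hzero, map_zero, zero_div]
  exact sub_eq_zero.mp this

include hδadd hδmul hK ht htr hnewconst in
/-- Hermite reduction: existence of the decomposition. -/
theorem hermite_reduce :
    ∀ N (d : Polynomial ↥K), d.Monic → d.natDegree ≤ N → ∀ a : Polynomial ↥K,
    ∃ (w : F) (r p q : Polynomial ↥K), q ≠ 0 ∧ p.degree < q.degree ∧ Squarefree q ∧
      Polynomial.aeval t a / Polynomial.aeval t d
        = δ w + Polynomial.aeval t r + Polynomial.aeval t p / Polynomial.aeval t q := by
  intro N
  induction N using Nat.strong_induction_on with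
  | _ N ih =>
  intro d hd hdN a
  have hd0 : d ≠ 0 := hd.ne_zero
  have hεd := ε_ne_zero htr hd0
  by_cases hsf : Squarefree d
  · refine ⟨0, a /ₘ d, a %ₘ d, d, hd0, degree_modByMonic_lt a hd, hsf, ?_⟩
    rw [δ_zero hδadd, zero_add]
    have h2 : (Polynomial.aeval t) a
        = (Polynomial.aeval t) (a %ₘ d) + (Polynomial.aeval t) d * (Polynomial.aeval t) (a /ₘ d) := by
      rw [← map_mul, ← map_add, modByMonic_add_div a d]
    rw [h2]
    field_simp
    ring
  · classical
    obtain ⟨z, hzz, hznu⟩ : ∃ z, z * z ∣ d ∧ ¬ IsUnit z := by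
      rw [Squarefree] at hsf; push_neg at hsf; exact hsf
    have hz0 : z ≠ 0 := by
      rintro rfl
      rw [mul_zero, zero_dvd_iff] at hzz
      exact hd0 hzz
    obtain ⟨v0, hv0irr, hv0z⟩ := WfDvdMonoid.exists_irreducible_factor hznu hz0
    set v := normalize v0 with hvdef
    have hvirr : Irreducible v := (associated_normalize v0).irreducible hv0irr
    have hvmonic : v.Monic := monic_normalize hv0irr.ne_zero
    have hvprime : Prime v := hvirr.prime
    have hv0 : v ≠ 0 := hvmonic.ne_zero
    have hvz : v ∣ z := (normalize_dvd_iff).mpr hv0z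
    have hvvd : v ^ 2 ∣ d := by
      rw [sq]
      exact (mul_dvd_mul hvz hvz).trans hzz
    obtain ⟨m, u, hdu, hvu⟩ := extract_pow hvirr.natDegree_pos d.natDegree d le_rfl hd0
    have hm2 : 2 ≤ m := by
      rw [hdu] at hvvd
      exact (pow_dvd_pow_iff hv0 hvirr.not_isUnit).mp
        (hvprime.pow_dvd_of_dvd_mul_right 2 hvu hvvd)
    obtain ⟨n, rfl⟩ : ∃ n, m = n + 2 := ⟨m - 2, by omega⟩
    have humonic : u.Monic := (hvmonic.pow _).of_mul_monic_left (by rwa [← hdu])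
    have hu0 : u ≠ 0 := humonic.ne_zero
    have hεv := ε_ne_zero htr hv0
    have hεu := ε_ne_zero htr hu0
    -- coprimality and Bezout
    have hcvu : IsCoprime v u := by
      apply EuclideanDomain.isCoprime_of_dvd
      · intro hvu0; exact hv0 hvu0.1
      · intro zz hzznu hzz0 hzzv hzzu
        obtain ⟨cc, hcc⟩ := hzzv
        rcases hvirr.isUnit_or_isUnit hcc with h | h
        · exact hzznu h
        · refine hvu (dvd_trans ?_ hzzu)
          rw [hcc]
          exact (associated_mul_unit_left zz cc h).dvd
    have hcvDv : IsCoprime v (DD δ K t hK ht v) :=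
      coprime_DD hδadd hδmul hK ht htr hnewconst hvmonic hvirr.squarefree
    have hcC : IsCoprime v (C ((n + 1 : ℕ) : ↥K)) :=
      isCoprime_of_isUnit_right' _ _
        (isUnit_C.mpr (isUnit_iff_ne_zero.mpr (by exact_mod_cast Nat.succ_ne_zero n)))
    have hcop : IsCoprime v (C ((n + 1 : ℕ) : ↥K) * u * DD δ K t hK ht v) :=
      (hcC.mul_right hcvu).mul_right hcvDv
    obtain ⟨s, c', hbez⟩ := hcop
    obtain ⟨c, hcdef⟩ : ∃ c : Polynomial ↥K, c = -(c' * a) := ⟨_, rfl⟩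
    obtain ⟨bb, hbbdef⟩ : ∃ bb : Polynomial ↥K,
      bb = a * s - u * DD δ K t hK ht c := ⟨_, rfl⟩
    have hkey : a - bb * v
        = u * (v * DD δ K t hK ht c - C ((n + 1 : ℕ) : ↥K) * DD δ K t hK ht v * c) := by
      rw [hbbdef]
      linear_combination (-a) * hbez + (C ((n + 1 : ℕ) : ↥K) * u * DD δ K t hK ht v) * hcdef
    have hC : (Polynomial.aeval t) (C ((n + 1 : ℕ) : ↥K)) = ((n + 1 : ℕ) : F) := by
      rw [aeval_C, map_natCast]
    have hkeyF : (Polynomial.aeval t) a - (Polynomial.aeval t) bb * (Polynomial.aeval t) v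
        = (Polynomial.aeval t) u * ((Polynomial.aeval t) v
            * (Polynomial.aeval t) (DD δ K t hK ht c)
          - ((n : F) + 1) * (Polynomial.aeval t) (DD δ K t hK ht v)
            * (Polynomial.aeval t) c) := by
      have h3 := congrArg (Polynomial.aeval t) hkey
      rw [map_sub, map_mul, map_mul, map_sub, map_mul, map_mul, map_mul, hC] at h3
      push_cast at h3
      linear_combination h3
    have hstep : Polynomial.aeval t a / Polynomial.aeval t d
        = δ (Polynomial.aeval t c / (Polynomial.aeval t v) ^ (n + 1))
          + Polynomial.aeval t bb / Polynomial.aeval t (u * v ^ (n + 1)) := by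
      have hδq : δ (Polynomial.aeval t c / (Polynomial.aeval t v) ^ (n + 1))
          = ((Polynomial.aeval t) (DD δ K t hK ht c) * (Polynomial.aeval t v) ^ (n + 1)
            - (Polynomial.aeval t) c * (((n : F) + 1) * (Polynomial.aeval t v) ^ n
                * (Polynomial.aeval t) (DD δ K t hK ht v)))
              / ((Polynomial.aeval t v) ^ (n + 1)) ^ 2 := by
        rw [δ_div hδadd hδmul _ _ (pow_ne_zero _ hεv), δ_pow hδmul,
          ε_DD hδadd hδmul hK ht, ε_DD hδadd hδmul hK ht]
      rw [hδq, hdu, map_mul, map_pow, map_mul, map_pow]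
      rw [div_add_div _ _ (pow_ne_zero 2 (pow_ne_zero _ hεv)) (mul_ne_zero hεu (pow_ne_zero _ hεv)),
        div_eq_div_iff (mul_ne_zero (pow_ne_zero _ hεv) hεu)
          (mul_ne_zero (pow_ne_zero 2 (pow_ne_zero _ hεv)) (mul_ne_zero hεu (pow_ne_zero _ hεv)))]
      linear_combination ((Polynomial.aeval t u) * (Polynomial.aeval t v) ^ (3 * n + 3)) * hkeyF
    have hd2monic : (u * v ^ (n + 1)).Monic := humonic.mul (hvmonic.pow _)
    have hdeg2 : (u * v ^ (n + 1)).natDegree < d.natDegree := by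
      rw [hdu, natDegree_mul (pow_ne_zero _ hv0) hu0, natDegree_mul hu0 (pow_ne_zero _ hv0),
        natDegree_pow, natDegree_pow]
      have h5 := hvirr.natDegree_pos
      have h6 : (n + 1) * v.natDegree < (n + 2) * v.natDegree := by
        exact Nat.mul_lt_mul_of_lt_of_le (by omega) le_rfl h5
      omega
    obtain ⟨w', r, p, q, hq0, hpq, hsfq, heq2⟩ :=
      ih _ (lt_of_lt_of_le hdeg2 hdN) _ hd2monic le_rfl bb
    refine ⟨Polynomial.aeval t c / (Polynomial.aeval t v) ^ (n + 1) + w', r, p, q,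
      hq0, hpq, hsfq, ?_⟩
    rw [hδadd, hstep, heq2]
    ring

end MainLemmas


end HermiteAux

theorem hermitian_part_exists_unique (F : Type*) [Field F] [CharZero F]
    (δ : F → F)
    (hδadd : ∀ a b : F, δ (a + b) = δ a + δ b)
    (hδmul : ∀ a b : F, δ (a * b) = δ a * b + a * δ b)
    (K : Subfield F) (hK : ∀ a ∈ K, δ a ∈ K)
    (t : F) (htr : Transcendental ↥K t) (ht : δ t ∈ K)
    (hgen : Subfield.closure ((K : Set F) ∪ {t}) = ⊤)
    (hnewconst : ∀ c : F, δ c = 0 → c ∈ K)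
    (f : F) :
    ∃! h : F,
      (∃ p q : Polynomial ↥K, q ≠ 0 ∧ p.degree < q.degree ∧ Squarefree q ∧
        h = Polynomial.aeval t p / Polynomial.aeval t q) ∧
      (∃ (w : F) (r : Polynomial ↥K), f - h = δ w + Polynomial.aeval t r) := by
  classical
  obtain ⟨p0, q0, hq00, hf⟩ := HermiteAux.rep htr hgen f
  set d := q0 * C q0.leadingCoeff⁻¹ with hddef
  set a := p0 * C q0.leadingCoeff⁻¹ with hadef
  have hdmonic : d.Monic := monic_mul_leadingCoeff_inv hq00
  have hCu : (C q0.leadingCoeff⁻¹ : Polynomial ↥K) ≠ 0 := by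
    simpa using inv_ne_zero (leadingCoeff_ne_zero.mpr hq00)
  have hfd : f = Polynomial.aeval t a / Polynomial.aeval t d := by
    rw [hf, hadef, hddef, map_mul, map_mul,
      mul_div_mul_right _ _ (HermiteAux.ε_ne_zero htr hCu)]
  obtain ⟨w, r, p, q, hq0, hpq, hsfq, heq⟩ :=
    HermiteAux.hermite_reduce hδadd hδmul hK ht htr hnewconst d.natDegree d hdmonic le_rfl a
  refine ⟨Polynomial.aeval t p / Polynomial.aeval t q,
    ⟨⟨p, q, hq0, hpq, hsfq, rfl⟩, w, r, ?_⟩, ?_⟩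
  · rw [hfd, heq]; ring
  · rintro y ⟨⟨p2, q2, hq2, hpq2, hsf2, rfl⟩, w2, r2, hy2⟩
    have hh : f - Polynomial.aeval t p / Polynomial.aeval t q
        = δ w + Polynomial.aeval t r := by rw [hfd, heq]; ring
    have hdiff : Polynomial.aeval t p2 / Polynomial.aeval t q2
        - Polynomial.aeval t p / Polynomial.aeval t q
        = δ (w - w2) + Polynomial.aeval t (r - r2) := by
      rw [HermiteAux.δ_sub hδadd, map_sub]
      have h1 := hy2
      have h2 := hh
      linear_combination h2 - h1
    exact HermiteAux.diff_simple hδadd hδmul hK ht htr hgen hnewconst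
      hq2 hq0 hsf2 hsfq hpq2 hpq hdiff
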